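/- Let M be a matroid on E, 𝔖 ⊆ P(E) a collection of subsets, and Z ∈ 𝔖. Then ec_𝔖(M) − ec_{𝔖∖{Z}}(M) = a_𝔖(Z)·b_𝔖(Z), where a and b are defined via the Möbius function of the poset 𝔖 ordered by inclusion. -/
import Mathlib


def RankAxioms {α : Type*} [DecidableEq α] (E : Finset α) (rk : Finset α → ℕ) : Prop :=
  rk ∅ = 0 ∧
  (∀ F ⊆ E, ∀ x ∈ E, rk (insert x F) = rk F ∨ rk (insert x F) = rk F + 1) ∧
  (∀ F ⊆ E, ∀ x ∈ E, ∀ y ∈ E,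
    rk (insert x F) = rk F → rk (insert y F) = rk F → rk (insert x (insert y F)) = rk F)

/-- The Möbius function of the inclusion poset on the collection `𝔖`. -/
def mob {α : Type*} [DecidableEq α] (𝔖 : Finset (Finset α)) (T S : Finset α) : ℤ :=
  if T = S then 1
  else if T ∈ 𝔖 ∧ S ∈ 𝔖 ∧ T ⊆ S then
    - ∑ U ∈ (𝔖.filter fun U => T ⊆ U ∧ U ⊂ S).attach, mob 𝔖 T U.1
  else 0
termination_by S.card
decreasing_by
  exact Finset.card_lt_card (Finset.mem_filter.mp U.2).2.2

/-- `c(S) = #S − rk S`. -/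
def cFn {α : Type*} (rk : Finset α → ℕ) (S : Finset α) : ℤ :=
  (S.card : ℤ) - rk S

/-- `a_𝔖(S) = Σ_{T ∈ 𝔖} c(T) μ_𝔖(T,S)`. -/
def aFn {α : Type*} [DecidableEq α] (𝔖 : Finset (Finset α)) (rk : Finset α → ℕ)
    (S : Finset α) : ℤ :=
  ∑ T ∈ 𝔖, cFn rk T * mob 𝔖 T S

/-- `b_𝔖(T) = Σ_{S ∈ 𝔖} (k − rk S) μ_𝔖(T,S)`. -/
def bFn {α : Type*} [DecidableEq α] (𝔖 : Finset (Finset α)) (rk : Finset α → ℕ)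
    (k : ℕ) (T : Finset α) : ℤ :=
  ∑ S ∈ 𝔖, ((k : ℤ) - rk S) * mob 𝔖 T S

/-- `ec_𝔖(M) = Σ_{S,T ∈ 𝔖} c(T)(k − rk S) μ_𝔖(T,S)`. -/
def ecFn {α : Type*} [DecidableEq α] (𝔖 : Finset (Finset α)) (rk : Finset α → ℕ)
    (k : ℕ) : ℤ :=
  ∑ S ∈ 𝔖, ∑ T ∈ 𝔖, cFn rk T * ((k : ℤ) - rk S) * mob 𝔖 T S

lemma mob_self {α : Type*} [DecidableEq α] (𝔖 : Finset (Finset α)) (T : Finset α) :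
    mob 𝔖 T T = 1 := by
  rw [mob]; simp

lemma mob_eq_zero {α : Type*} [DecidableEq α] (𝔖 : Finset (Finset α)) {T S : Finset α}
    (h1 : T ≠ S) (h2 : ¬(T ∈ 𝔖 ∧ S ∈ 𝔖 ∧ T ⊆ S)) : mob 𝔖 T S = 0 := by
  rw [mob, if_neg h1, if_neg h2]

lemma mob_rec {α : Type*} [DecidableEq α] (𝔖 : Finset (Finset α)) {T S : Finset α}
    (hT : T ∈ 𝔖) (hS : S ∈ 𝔖) (hTS : T ⊆ S) (hne : T ≠ S) :
    mob 𝔖 T S = - ∑ U ∈ 𝔖.filter fun U => T ⊆ U ∧ U ⊂ S, mob 𝔖 T U := by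
  rw [mob, if_neg hne, if_pos ⟨hT, hS, hTS⟩, Finset.sum_attach]

lemma mob_not_subset {α : Type*} [DecidableEq α] (𝔖 : Finset (Finset α)) {T S : Finset α}
    (h : ¬ T ⊆ S) : mob 𝔖 T S = 0 := by
  apply mob_eq_zero
  · rintro rfl; exact h subset_rfl
  · rintro ⟨-, -, h'⟩; exact h h'

/-- Key deletion identity for the Möbius function. -/
lemma mob_erase {α : Type*} [DecidableEq α] (𝔖 : Finset (Finset α)) (Z : Finset α)
    (hZ : Z ∈ 𝔖) :
    ∀ S T : Finset α, T ≠ Z → S ≠ Z →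
      mob (𝔖.erase Z) T S = mob 𝔖 T S - mob 𝔖 T Z * mob 𝔖 Z S := by
  intro S
  induction S using Finset.strongInduction with
  | _ S ih =>
  intro T hTZ hSZ
  by_cases hTS : T = S
  · subst hTS
    rw [mob_self, mob_self]
    by_cases hTZ' : T ⊆ Z
    · rw [mob_not_subset 𝔖 (S := T) (fun h => hTZ (subset_antisymm hTZ' h))]
      ring
    · rw [mob_not_subset 𝔖 hTZ']; ring
  by_cases hcond : T ∈ 𝔖 ∧ S ∈ 𝔖 ∧ T ⊆ S
  · obtain ⟨hT, hS, hsub⟩ := hcond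
    have hT' : T ∈ 𝔖.erase Z := Finset.mem_erase.mpr ⟨hTZ, hT⟩
    have hS' : S ∈ 𝔖.erase Z := Finset.mem_erase.mpr ⟨hSZ, hS⟩
    rw [mob_rec _ hT' hS' hsub hTS, mob_rec 𝔖 hT hS hsub hTS]
    have hfe : (𝔖.erase Z).filter (fun U => T ⊆ U ∧ U ⊂ S)
        = (𝔖.filter fun U => T ⊆ U ∧ U ⊂ S).erase Z := by
      rw [Finset.filter_erase]
    rw [hfe]
    have hih : ∀ U ∈ (𝔖.filter fun U => T ⊆ U ∧ U ⊂ S).erase Z,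
        mob (𝔖.erase Z) T U = mob 𝔖 T U - mob 𝔖 T Z * mob 𝔖 Z U := by
      intro U hU
      have hU' := Finset.mem_of_mem_erase hU
      exact ih U (Finset.mem_filter.mp hU').2.2 T hTZ (Finset.ne_of_mem_erase hU)
    rw [Finset.sum_congr rfl hih, Finset.sum_sub_distrib]
    by_cases hZF : Z ∈ 𝔖.filter fun U => T ⊆ U ∧ U ⊂ S
    · -- Z is in the interval
      obtain ⟨-, hTZsub, hZS⟩ := Finset.mem_filter.mp hZF
      have h1 : ∑ U ∈ (𝔖.filter fun U => T ⊆ U ∧ U ⊂ S).erase Z, mob 𝔖 T U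
          = (∑ U ∈ 𝔖.filter fun U => T ⊆ U ∧ U ⊂ S, mob 𝔖 T U) - mob 𝔖 T Z := by
        rw [← Finset.add_sum_erase _ _ hZF]; ring
      have h2 : ∑ U ∈ (𝔖.filter fun U => T ⊆ U ∧ U ⊂ S).erase Z, mob 𝔖 T Z * mob 𝔖 Z U
          = mob 𝔖 T Z * ((∑ U ∈ 𝔖.filter fun U => T ⊆ U ∧ U ⊂ S, mob 𝔖 Z U) - 1) := by
        rw [mul_sub, Finset.mul_sum,
          ← Finset.add_sum_erase _ (fun U => mob 𝔖 T Z * mob 𝔖 Z U) hZF, mob_self, mul_one]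
        ring
      have h3 : (∑ U ∈ 𝔖.filter fun U => T ⊆ U ∧ U ⊂ S, mob 𝔖 Z U)
          = ∑ U ∈ 𝔖.filter fun U => Z ⊆ U ∧ U ⊂ S, mob 𝔖 Z U := by
        apply (Finset.sum_subset ?_ ?_).symm
        · intro U hU
          obtain ⟨hU1, hU2, hU3⟩ := Finset.mem_filter.mp hU
          exact Finset.mem_filter.mpr ⟨hU1, hTZsub.trans hU2, hU3⟩
        · intro U hU hU'
          obtain ⟨hU1, hU2, hU3⟩ := Finset.mem_filter.mp hU
          apply mob_not_subset
          intro hc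
          exact hU' (Finset.mem_filter.mpr ⟨hU1, hc, hU3⟩)
      have h4 : mob 𝔖 Z S = - ∑ U ∈ 𝔖.filter fun U => Z ⊆ U ∧ U ⊂ S, mob 𝔖 Z U :=
        mob_rec 𝔖 hZ hS hZS.subset (fun h => hSZ h.symm)
      rw [h1, h2, h3, ← neg_neg (∑ U ∈ 𝔖.filter fun U => Z ⊆ U ∧ U ⊂ S, mob 𝔖 Z U), ← h4]
      ring
    · -- Z not in the interval
      rw [Finset.erase_eq_of_notMem hZF]
      by_cases hTZsub : T ⊆ Z
      · have hZS : ¬ Z ⊆ S := by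
          intro hc
          exact hZF (Finset.mem_filter.mpr ⟨hZ, hTZsub, hc.ssubset_of_ne (Ne.symm hSZ)⟩)
        have hzs0 : mob 𝔖 Z S = 0 := mob_not_subset 𝔖 hZS
        have hsum0 : ∑ U ∈ 𝔖.filter (fun U => T ⊆ U ∧ U ⊂ S), mob 𝔖 T Z * mob 𝔖 Z U = 0 := by
          apply Finset.sum_eq_zero
          intro U hU
          obtain ⟨-, -, hU3⟩ := Finset.mem_filter.mp hU
          rw [mob_not_subset 𝔖 (fun hc => hZS (hc.trans hU3.subset)), mul_zero]
        rw [hzs0, hsum0]; ring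
      · rw [mob_not_subset 𝔖 hTZsub]; simp
  · rw [mob_eq_zero 𝔖 hTS hcond]
    have hL : mob (𝔖.erase Z) T S = 0 := by
      apply mob_eq_zero _ hTS
      rintro ⟨h1, h2, h3⟩
      exact hcond ⟨Finset.mem_of_mem_erase h1, Finset.mem_of_mem_erase h2, h3⟩
    rw [hL]
    push_neg at hcond
    by_cases hT : T ∈ 𝔖
    · by_cases hS : S ∈ 𝔖
      · have hns : ¬ T ⊆ S := hcond hT hS
        by_cases hTZsub : T ⊆ Z
        · rw [mob_not_subset 𝔖 (S := S) (T := Z) (fun hc => hns (hTZsub.trans hc))]; ring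
        · rw [mob_not_subset 𝔖 hTZsub]; ring
      · rw [mob_eq_zero 𝔖 (fun h : Z = S => hS (h ▸ hZ)) (by tauto)]; ring
    · rw [mob_eq_zero 𝔖 hTZ (by tauto)]; ring

/-- Removing one set `Z` from the collection changes the expected codimension by
`a_𝔖(Z)·b_𝔖(Z)`. -/
theorem ec_remove_formula {α : Type*} [DecidableEq α]
    (E : Finset α) (rk : Finset α → ℕ) (hrk : RankAxioms E rk)
    (𝔖 : Finset (Finset α)) (h𝔖 : ∀ S ∈ 𝔖, S ⊆ E) (Z : Finset α) (hZ : Z ∈ 𝔖) :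
    ecFn 𝔖 rk (rk E) - ecFn (𝔖.erase Z) rk (rk E)
      = aFn 𝔖 rk Z * bFn 𝔖 rk (rk E) Z := by
  set k := rk E with hk
  set 𝔖' := 𝔖.erase Z with h𝔖'
  -- step 1: rewrite ecFn of the erased family in terms of mob 𝔖
  have step1 : ecFn 𝔖' rk k =
      (∑ S ∈ 𝔖', ∑ T ∈ 𝔖', cFn rk T * ((k : ℤ) - rk S) * mob 𝔖 T S)
      - ∑ S ∈ 𝔖', ∑ T ∈ 𝔖', (cFn rk T * mob 𝔖 T Z) * (((k : ℤ) - rk S) * mob 𝔖 Z S) := by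
    rw [← Finset.sum_sub_distrib]
    unfold ecFn
    refine Finset.sum_congr rfl fun S hS => ?_
    rw [← Finset.sum_sub_distrib]
    refine Finset.sum_congr rfl fun T hT => ?_
    rw [mob_erase 𝔖 Z hZ S T (Finset.ne_of_mem_erase hT) (Finset.ne_of_mem_erase hS)]
    ring
  -- step 2: ecFn for the full family, splitting off Z
  have step2 : ecFn 𝔖 rk k =
      (∑ T ∈ 𝔖, cFn rk T * ((k : ℤ) - rk Z) * mob 𝔖 T Z)
      + ((∑ S ∈ 𝔖', cFn rk Z * ((k : ℤ) - rk S) * mob 𝔖 Z S)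
        + ∑ S ∈ 𝔖', ∑ T ∈ 𝔖', cFn rk T * ((k : ℤ) - rk S) * mob 𝔖 T S) := by
    unfold ecFn
    rw [← Finset.add_sum_erase _ _ hZ, ← h𝔖', ← Finset.sum_add_distrib]
    congr 1
    refine Finset.sum_congr rfl fun S hS => ?_
    rw [← Finset.add_sum_erase _ _ hZ, ← h𝔖']
  -- step 3: expand a·b
  have step3 : aFn 𝔖 rk Z * bFn 𝔖 rk k Z =
      ((cFn rk Z * mob 𝔖 Z Z) * (((k : ℤ) - rk Z) * mob 𝔖 Z Z)
        + ∑ S ∈ 𝔖', (cFn rk Z * mob 𝔖 Z Z) * (((k : ℤ) - rk S) * mob 𝔖 Z S))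
      + ((∑ T ∈ 𝔖', (cFn rk T * mob 𝔖 T Z) * (((k : ℤ) - rk Z) * mob 𝔖 Z Z))
        + ∑ T ∈ 𝔖', ∑ S ∈ 𝔖', (cFn rk T * mob 𝔖 T Z) * (((k : ℤ) - rk S) * mob 𝔖 Z S)) := by
    unfold aFn bFn
    rw [Finset.sum_mul_sum, ← Finset.add_sum_erase _ _ hZ, ← h𝔖']
    congr 1
    · rw [← Finset.add_sum_erase _ _ hZ, ← h𝔖']
    · rw [← Finset.sum_add_distrib]
      refine Finset.sum_congr rfl fun T hT => ?_
      rw [← Finset.add_sum_erase _ _ hZ, ← h𝔖']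
  rw [step1, step2, step3, mob_self]
  have e1 : ∑ T ∈ 𝔖, cFn rk T * ((k : ℤ) - rk Z) * mob 𝔖 T Z
      = (cFn rk Z * 1) * (((k : ℤ) - rk Z) * 1)
        + ∑ T ∈ 𝔖', (cFn rk T * mob 𝔖 T Z) * (((k : ℤ) - rk Z) * 1) := by
    rw [← Finset.add_sum_erase _ _ hZ, ← h𝔖', mob_self]
    congr 1
    · ring
    · exact Finset.sum_congr rfl fun T hT => by ring
  have e2 : ∑ S ∈ 𝔖', cFn rk Z * ((k : ℤ) - rk S) * mob 𝔖 Z S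
      = ∑ S ∈ 𝔖', (cFn rk Z * 1) * (((k : ℤ) - rk S) * mob 𝔖 Z S) :=
    Finset.sum_congr rfl fun S hS => by ring
  have e3 : ∑ S ∈ 𝔖', ∑ T ∈ 𝔖', (cFn rk T * mob 𝔖 T Z) * (((k : ℤ) - rk S) * mob 𝔖 Z S)
      = ∑ T ∈ 𝔖', ∑ S ∈ 𝔖', (cFn rk T * mob 𝔖 T Z) * (((k : ℤ) - rk S) * mob 𝔖 Z S) :=
    Finset.sum_comm
  rw [e1, e2, ← e3]
  ring
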